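/- Suppose the set of permissible databases is unconstrained, i.e., I = T^n. Then for all databases D, D' ∈ I, D ∼ D' (D and D' are minimally secretly different) if and only if there exist an index i ∈ [n] and values u, v ∈ T such that tdiff(D,D') = sdiff(D,D') = {(i,u,v)}; equivalently, D and D' differ at exactly one index i and the pair (D_i, D'_i) is an edge of the secret graph. -/
import Mathlib


/-- The total difference between two databases `D` and `D'`: triples `(i, u, v)`
with `u = D i`, `v = D' i`, `u ≠ v`. -/
def totalDiff {T : Type*} {n : ℕ} (D D' : Fin n → T) : Set (Fin n × T × T) :=
  {x | D x.1 = x.2.1 ∧ D' x.1 = x.2.2 ∧ x.2.1 ≠ x.2.2}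

/-- The secret difference: the subset of the total difference whose value pair is an
edge of the secret graph `G`. -/
def secretDiff {T : Type*} {n : ℕ} (G : SimpleGraph T) (D D' : Fin n → T) :
    Set (Fin n × T × T) :=
  {x ∈ totalDiff D D' | G.Adj x.2.1 x.2.2}

/-- Databases `D, D' ∈ I` are minimally secretly different (adjacent in the database
adjacency graph): the secret difference is nonempty, and no permissible `D''` with
nonempty secret difference has a strictly smaller secret difference, or the same
secret difference with a strictly smaller total difference. -/
def BlowfishAdj {T : Type*} {n : ℕ} (G : SimpleGraph T) (I : Set (Fin n → T))
    (D D' : Fin n → T) : Prop :=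
  D ∈ I ∧ D' ∈ I ∧ secretDiff G D D' ≠ ∅ ∧
    ¬ ∃ D'' ∈ I, secretDiff G D D'' ≠ ∅ ∧
      (secretDiff G D D'' ⊂ secretDiff G D D' ∨
        (secretDiff G D D'' = secretDiff G D D' ∧ totalDiff D D'' ⊂ totalDiff D D'))

/-- If the set of permissible databases is unconstrained (`I = T^n`), then `D ∼ D'`
iff `tdiff(D,D') = sdiff(D,D') = {(i,u,v)}` for some index `i` and values `u,v`,
i.e. `D` and `D'` differ at exactly one index and the differing pair is a secret. -/
theorem blowfishAdj_unconstrained_iff {T : Type*} [Fintype T] (G : SimpleGraph T)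
    (n : ℕ) (D D' : Fin n → T) :
    BlowfishAdj G (Set.univ : Set (Fin n → T)) D D' ↔
      ∃ (i : Fin n) (u v : T),
        totalDiff D D' = {(i, u, v)} ∧ secretDiff G D D' = {(i, u, v)} := by
  have hsub : ∀ (A B : Fin n → T), secretDiff G A B ⊆ totalDiff A B :=
    fun A B x hx => hx.1
  constructor
  · rintro ⟨-, -, hne, hmin⟩
    rw [← Set.nonempty_iff_ne_empty] at hne
    obtain ⟨⟨i, u, v⟩, ⟨hu, hv, huv⟩, hadj⟩ := hne
    set D'' := Function.update D i v with hD''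
    have htd : totalDiff D D'' = {(i, u, v)} := by
      ext ⟨j, a, b⟩
      simp only [totalDiff, Set.mem_setOf_eq, Set.mem_singleton_iff, Prod.mk.injEq]
      constructor
      · rintro ⟨ha, hb, hab⟩
        by_cases hj : j = i
        · subst hj
          rw [hD'', Function.update_self] at hb
          exact ⟨rfl, by rw [← ha, hu], hb.symm⟩
        · rw [hD'', Function.update_of_ne hj] at hb
          exact absurd (ha.symm.trans hb) hab
      · rintro ⟨rfl, rfl, rfl⟩
        exact ⟨hu, by rw [hD'', Function.update_self], huv⟩
    have hsd : secretDiff G D D'' = {(i, u, v)} := by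
      ext x
      simp only [secretDiff, Set.mem_setOf_eq, htd, Set.mem_singleton_iff]
      constructor
      · rintro ⟨h, -⟩; exact h
      · rintro rfl; exact ⟨rfl, hadj⟩
    have hsne : secretDiff G D D'' ≠ ∅ := by
      rw [hsd]; exact Set.singleton_ne_empty _
    have hsd_sub : secretDiff G D D'' ⊆ secretDiff G D D' := by
      rw [hsd]
      rintro x rfl
      exact ⟨⟨hu, hv, huv⟩, hadj⟩
    have hsd_eq : secretDiff G D D' = {(i, u, v)} := by
      by_contra h
      exact hmin ⟨D'', Set.mem_univ _, hsne,
        Or.inl ⟨hsd_sub, fun hle => h ((le_antisymm hle hsd_sub).trans hsd)⟩⟩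
    have htd_sub : totalDiff D D'' ⊆ totalDiff D D' := by
      rw [htd]
      rintro x rfl
      exact hsub D D' ⟨⟨hu, hv, huv⟩, hadj⟩
    have htd_eq : totalDiff D D' = {(i, u, v)} := by
      by_contra h
      exact hmin ⟨D'', Set.mem_univ _, hsne,
        Or.inr ⟨hsd.trans hsd_eq.symm, htd_sub, fun hle => h ((le_antisymm hle htd_sub).trans htd)⟩⟩
    exact ⟨i, u, v, htd_eq, hsd_eq⟩
  · rintro ⟨i, u, v, htd, hsd⟩
    refine ⟨Set.mem_univ _, Set.mem_univ _, by rw [hsd]; exact Set.singleton_ne_empty _, ?_⟩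
    rintro ⟨D'', -, hne, h | ⟨heq, hlt⟩⟩
    · rw [hsd] at h
      rcases Set.ssubset_singleton_iff.mp h with he
      exact hne he
    · rw [htd] at hlt
      have := Set.ssubset_singleton_iff.mp hlt
      have : secretDiff G D D'' = ∅ :=
        Set.subset_empty_iff.mp (this ▸ hsub D D'')
      exact hne this
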